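/- If a graph G on n vertices has no isolated vertices and the complement of G is a forest, then every matrix A ∈ S(G) has the Strong Arnold Property. -/

import Mathlib

/-- The Strong Arnold Property. -/
def HasSAP {V : Type*} [Fintype V] [DecidableEq V] (A : Matrix V V ℝ) : Prop :=
  ∀ X : Matrix V V ℝ, X.IsSymm → (∀ i, X i i = 0) →
    (∀ i j, i ≠ j → A i j ≠ 0 → X i j = 0) → A * X = 0 → X = 0

/-- `A ∈ S(G)`. -/
def InS {V : Type*} [Fintype V] [DecidableEq V] (G : SimpleGraph V)
    (A : Matrix V V ℝ) : Prop :=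
  A.IsSymm ∧ ∀ i j, i ≠ j → (A i j ≠ 0 ↔ G.Adj i j)

/-- Nullity of a square real matrix. -/
noncomputable def nullity {V : Type*} [Fintype V] [DecidableEq V]
    (A : Matrix V V ℝ) : ℕ :=
  Fintype.card V - A.rank

/-- Maximum nullity over `S(G)`. -/
noncomputable def MaxNull {V : Type*} [Fintype V] [DecidableEq V]
    (G : SimpleGraph V) : ℕ :=
  sSup {k | ∃ A : Matrix V V ℝ, InS G A ∧ nullity A = k}

/-- The Colin de Verdière type parameter `ξ(G)`. -/
noncomputable def xi {V : Type*} [Fintype V] [DecidableEq V]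
    (G : SimpleGraph V) : ℕ :=
  sSup {k | ∃ A : Matrix V V ℝ, InS G A ∧ HasSAP A ∧ nullity A = k}

/-- A finite acyclic graph with an edge has a leaf. -/
lemma exists_leaf_aux {V : Type*} [Fintype V] [DecidableEq V] {H : SimpleGraph V}
    (hac : H.IsAcyclic) {a b : V} (hab : H.Adj a b) :
    ∃ u v, H.Adj u v ∧ ∀ w, H.Adj u w → w = v := by
  classical
  set S : Set ℕ := {n | ∃ (u v : V) (p : H.Walk u v), p.IsPath ∧ p.length = n} with hS
  have hbdd : BddAbove S := by
    refine ⟨Fintype.card V, fun n hn => ?_⟩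
    obtain ⟨u, v, p, hp, hlen⟩ := hn
    exact hlen ▸ (hp.length_lt).le
  have h1 : (1 : ℕ) ∈ S :=
    ⟨a, b, SimpleGraph.Walk.cons hab SimpleGraph.Walk.nil, by simp [hab.ne], by simp⟩
  have hne : S.Nonempty := ⟨1, h1⟩
  have hmem : sSup S ∈ S := Nat.sSup_mem hne hbdd
  obtain ⟨u, v, p, hp, hlen⟩ := hmem
  have hone : 1 ≤ sSup S := le_csSup hbdd h1
  cases p with
  | nil => simp at hlen; omega
  | @cons _ d _ h q =>
    refine ⟨u, d, h, fun w hw => ?_⟩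
    by_cases hws : w ∈ (SimpleGraph.Walk.cons h q).support
    · -- the path from u to w must be the single edge
      have ht : ((SimpleGraph.Walk.cons h q).takeUntil w hws).IsPath := hp.takeUntil hws
      have heq : (⟨(SimpleGraph.Walk.cons h q).takeUntil w hws, ht⟩ : H.Path u w) =
          SimpleGraph.Path.singleton hw := hac.path_unique _ _
      have heq' : (SimpleGraph.Walk.cons h q).takeUntil w hws =
          SimpleGraph.Walk.cons hw SimpleGraph.Walk.nil := by
        simpa [SimpleGraph.Path.singleton] using congrArg Subtype.val heq
      have hspec := SimpleGraph.Walk.take_spec (SimpleGraph.Walk.cons h q) hws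
      rw [heq'] at hspec
      have := congrArg (fun r => SimpleGraph.Walk.getVert r 1) hspec
      simpa [SimpleGraph.Walk.getVert_cons_succ, SimpleGraph.Walk.getVert_zero] using this
    · -- we could extend the maximal path, contradiction
      exfalso
      have hp' : (SimpleGraph.Walk.cons hw.symm (SimpleGraph.Walk.cons h q)).IsPath :=
        hp.cons hws
      have : (sSup S) + 1 ∈ S :=
        ⟨w, v, _, hp', by simp [hlen]⟩
      have := le_csSup hbdd this
      omega

theorem stmt_7 {V : Type*} [Fintype V] [DecidableEq V] (G : SimpleGraph V)
    (hiso : ∀ v : V, ∃ w, G.Adj v w) (hforest : Gᶜ.IsAcyclic) :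
    ∀ A : Matrix V V ℝ, InS G A → HasSAP A := by
  rintro A ⟨hAsym, hAadj⟩ X hXsym hXdiag hXsupp hAX
  by_contra hX0
  obtain ⟨i0, j0, hij0⟩ : ∃ i j, X i j ≠ 0 := by
    by_contra hc
    push_neg at hc
    exact hX0 (by ext i j; simpa using hc i j)
  -- the support graph of X
  set H : SimpleGraph V :=
    { Adj := fun i j => X i j ≠ 0
      symm := ⟨fun i j hij => by show X j i ≠ 0; rw [hXsym.apply]; exact hij⟩
      loopless := ⟨fun i hi => hi (hXdiag i)⟩ } with hH
  have hHadj : ∀ i j, H.Adj i j ↔ X i j ≠ 0 := fun i j => Iff.rfl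
  have hle : H ≤ Gᶜ := by
    intro i j hij
    have hne : i ≠ j := H.ne_of_adj hij
    refine ⟨hne, fun hGadj => ?_⟩
    exact hij (hXsupp i j hne ((hAadj i j hne).mpr hGadj))
  have hHac : H.IsAcyclic := fun v c hc =>
    hforest (c.mapLe hle) (hc.mapLe (h := hle))
  obtain ⟨u, v, huv, hleaf⟩ := exists_leaf_aux hHac (show H.Adj i0 j0 from hij0)
  -- (A * X) i u = A i v * X v u for all i
  have hXvu : X v u ≠ 0 := (H.adj_symm huv)
  have hXku : ∀ k, k ≠ v → X k u = 0 := by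
    intro k hk
    by_contra hXk
    exact hk (hleaf k (H.adj_symm hXk))
  have hAiv : ∀ i, A i v = 0 := by
    intro i
    have h0 : (A * X) i u = 0 := by rw [hAX]; rfl
    rw [Matrix.mul_apply] at h0
    have hsum : ∀ k ∈ Finset.univ, k ≠ v → A i k * X k u = 0 := by
      intro k _ hk
      rw [hXku k hk, mul_zero]
    rw [Finset.sum_eq_single_of_mem v (Finset.mem_univ v) hsum] at h0
    exact (mul_eq_zero.mp h0).resolve_right hXvu
  obtain ⟨w, hvw⟩ := hiso v
  have hwv : A w v ≠ 0 := by
    rw [hAsym.apply]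
    exact (hAadj v w hvw.ne).mpr hvw
  exact hwv (hAiv w)
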